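/- Let 𝔸 = A_{v_1} ⊕ ⋯ ⊕ A_{v_s} be a complete sum of conic modules and let E = End_R(𝔸). For every v ∈ ℝ^d, the right E-module P_v = Hom_R(𝔸, A_v), with E acting by precomposition, is a finitely generated projective E-module, and P_v is indecomposable (it is nonzero and is not the internal direct sum of two nonzero E-submodules). -/

import Mathlib

open Set

set_option synthInstance.maxHeartbeats 1000000
set_option maxHeartbeats 4000000

universe u

noncomputable section

/-- The embedding of the lattice `ℤ^d` into `ℝ^d`. -/
def ιZ (d : ℕ) (m : Fin d → ℤ) : Fin d → ℝ := fun j => (m j : ℝ)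

/-- The lattice points of the translated cone `C + v`, where
`C = {x | ∀ i, 0 ≤ n i x}`. -/
def latticePts {d t : ℕ} (n : Fin t → ((Fin d → ℝ) →ₗ[ℝ] ℝ)) (v : Fin d → ℝ) :
    Set (Fin d → ℤ) :=
  {m | ∀ i, 0 ≤ n i (ιZ d m - v)}

/-- The toric algebra `R = k[C ∩ ℤ^d]`: the `k`-subalgebra of the Laurent
polynomial algebra `L = AddMonoidAlgebra k (Fin d → ℤ)` spanned (equivalently,
generated, since the monomial set is closed under multiplication and contains `1`)
by the monomials `x^m` with `m ∈ C ∩ ℤ^d`. -/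
def toricR (k : Type) [Field k] (d t : ℕ) (n : Fin t → ((Fin d → ℝ) →ₗ[ℝ] ℝ)) :
    Subalgebra k (AddMonoidAlgebra k (Fin d → ℤ)) :=
  Algebra.adjoin k
    {f | ∃ m : Fin d → ℤ, (∀ i, 0 ≤ n i (ιZ d m)) ∧ f = AddMonoidAlgebra.single m 1}

/-- The conic module `A_v`: the `R`-submodule of `L` spanned by the monomials `x^m`
with `m ∈ (C + v) ∩ ℤ^d`. -/
def conicA (k : Type) [Field k] (d t : ℕ) (n : Fin t → ((Fin d → ℝ) →ₗ[ℝ] ℝ))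
    (v : Fin d → ℝ) :
    Submodule ↥(toricR k d t n) (AddMonoidAlgebra k (Fin d → ℤ)) :=
  Submodule.span ↥(toricR k d t n)
    {f | ∃ m : Fin d → ℤ, (∀ i, 0 ≤ n i (ιZ d m - v)) ∧ f = AddMonoidAlgebra.single m 1}

/-- The endomorphism ring `End_R(M)` of a module `M` over a commutative ring `R`
(that is, `Module.End R M`, wrapped so that the ring structure is found smoothly). -/
def EndAlg (R M : Type*) [CommRing R] [AddCommGroup M] [Module R M] : Type _ :=
  Module.End R M

noncomputable instance (R M : Type*) [CommRing R] [AddCommGroup M] [Module R M] :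
    Ring (EndAlg R M) :=
  Module.End.instRing

/-- `ProjDimLE E n M` : the left `E`-module `M` has projective dimension at most `n`
(there is a projective resolution of length `n`, presented via iterated syzygies). -/
def ProjDimLE (E : Type*) [Ring E] :
    ℕ → ∀ (M : Type u) [AddCommGroup M] [Module E M], Prop
  | 0, M, _, _ => Module.Projective E M
  | n + 1, M, _, _ =>
    ∃ (P : Type u) (_ : AddCommGroup P) (_ : Module E P) (f : P →ₗ[E] M),
      Function.Surjective f ∧ Module.Projective E P ∧
        ProjDimLE E n ↥(LinearMap.ker f)

/-- The `R`-module `Hom_R(M, N)` of `R`-linear maps (wrapped so that the right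
`End_R(M)`-module structure by precomposition can be registered smoothly). -/
def HomMod (R M N : Type*) [CommRing R] [AddCommGroup M] [AddCommGroup N]
    [Module R M] [Module R N] : Type _ :=
  M →ₗ[R] N

noncomputable instance (R M N : Type*) [CommRing R] [AddCommGroup M] [AddCommGroup N]
    [Module R M] [Module R N] : AddCommGroup (HomMod R M N) :=
  LinearMap.addCommGroup

/-- Precomposition, as a ring homomorphism from the opposite ring of `End_R(M)` to
the endomorphisms of the additive group `Hom_R(M, N)`. -/
def precompHom (R M N : Type*) [CommRing R] [AddCommGroup M] [AddCommGroup N]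
    [Module R M] [Module R N] :
    (EndAlg R M)ᵐᵒᵖ →+* Module.End R (M →ₗ[R] N) where
  toFun e :=
    { toFun := fun f => f ∘ₗ (MulOpposite.unop e : Module.End R M)
      map_add' := fun f g => LinearMap.add_comp _ _ _
      map_smul' := fun c f => LinearMap.smul_comp c f _ }
  map_one' := by ext f x; rfl
  map_mul' := by intro a b; ext f x; rfl
  map_zero' := by ext f x; exact map_zero f
  map_add' := by
    intro a b; ext f x
    exact map_add f _ _

/-- The right `End_R(M)`-module structure on `Hom_R(M, N)` given by precomposition
(as a left module over the opposite ring). -/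
noncomputable instance rightEndModule (R M N : Type*) [CommRing R] [AddCommGroup M]
    [AddCommGroup N] [Module R M] [Module R N] :
    Module (EndAlg R M)ᵐᵒᵖ (HomMod R M N) :=
  Module.compHom (M →ₗ[R] N) (precompHom R M N)

/-! ### Auxiliary lemmas -/

section geom
variable {d t : ℕ} (n : Fin t → ((Fin d → ℝ) →ₗ[ℝ] ℝ))

lemma exists_nat_bound (r : Fin t → ℝ) : ∃ N : ℕ, ∀ i, r i ≤ N := by
  obtain ⟨N, hN⟩ := exists_nat_gt (∑ i, |r i|)
  exact ⟨N, fun i => le_trans (le_trans (le_abs_self _)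
    (Finset.single_le_sum (f := fun i => |r i|) (fun _ _ => abs_nonneg _)
      (Finset.mem_univ i))) hN.le⟩

lemma nexpand (i : Fin t) (y : Fin d → ℝ) :
    n i y = ∑ j, y j * n i (fun j' => if j = j' then 1 else 0) := by
  conv_lhs => rw [pi_eq_sum_univ y, map_sum]
  refine Finset.sum_congr rfl fun j _ => ?_
  rw [map_smul, smul_eq_mul]

lemma exists_deep (hx : ∃ x, ∀ i, 0 < n i x) :
    ∃ a : Fin d → ℤ, ∀ i, 1 ≤ n i (ιZ d a) := by
  obtain ⟨x, hx⟩ := hx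
  set B : Fin t → ℝ := fun i => ∑ j, |n i (fun j' => if j = j' then 1 else 0)| with hB
  obtain ⟨M, hM⟩ := exists_nat_bound (fun i => (B i + 1) / n i x)
  refine ⟨fun j => round ((M : ℝ) * x j), fun i => ?_⟩
  have h1 := nexpand n i (ιZ d (fun j => round ((M : ℝ) * x j)))
  have h2 : (M : ℝ) * n i x = ∑ j, ((M : ℝ) * x j) * n i (fun j' => if j = j' then 1 else 0) := by
    rw [nexpand n i x, Finset.mul_sum]
    exact Finset.sum_congr rfl fun j _ => by ring
  have h3 : |n i (ιZ d (fun j => round ((M : ℝ) * x j))) - (M : ℝ) * n i x| ≤ B i := by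
    rw [h1, h2, ← Finset.sum_sub_distrib]
    refine le_trans (Finset.abs_sum_le_sum_abs _ _) ?_
    rw [hB]
    refine Finset.sum_le_sum fun j _ => ?_
    rw [← sub_mul, abs_mul]
    have hr : |(↑(round ((M : ℝ) * x j)) : ℝ) - (M : ℝ) * x j| ≤ 1 := by
      rw [abs_sub_comm]
      linarith [abs_sub_round ((M : ℝ) * x j)]
    calc |(ιZ d (fun j => round ((M:ℝ) * x j)) j) - (M : ℝ) * x j| *
          |n i (fun j' => if j = j' then 1 else 0)|
        ≤ 1 * |n i (fun j' => if j = j' then 1 else 0)| := by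
          refine mul_le_mul_of_nonneg_right ?_ (abs_nonneg _)
          simpa [ιZ] using hr
      _ = _ := one_mul _
  have h4 : B i + 1 ≤ (M : ℝ) * n i x := (div_le_iff₀ (hx i)).mp (hM i)
  have := abs_le.mp h3
  linarith [this.1]

lemma latticePts_nonempty {a : Fin d → ℤ} (ha : ∀ i, 1 ≤ n i (ιZ d a)) (w : Fin d → ℝ) :
    ∃ p, p ∈ latticePts n w := by
  obtain ⟨N, hN⟩ := exists_nat_bound (fun i => n i w)
  refine ⟨fun j => N * a j, fun i => ?_⟩
  have hι : ιZ d (fun j => (N : ℤ) * a j) = (N : ℝ) • ιZ d a := by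
    funext j; simp only [ιZ, Pi.smul_apply, smul_eq_mul]; push_cast; ring
  rw [hι, map_sub, map_smul, smul_eq_mul]
  have h1 := ha i
  have h2 := hN i
  nlinarith [Nat.cast_nonneg (α := ℝ) N]

lemma exists_translate {a : Fin d → ℤ} (ha : ∀ i, 1 ≤ n i (ιZ d a)) (p q : Fin d → ℤ) :
    ∃ a' b' : Fin d → ℤ, (∀ i, 0 ≤ n i (ιZ d a')) ∧ (∀ i, 0 ≤ n i (ιZ d b')) ∧
      a' + p = b' + q := by
  obtain ⟨N, hN⟩ := exists_nat_bound (fun i => n i (ιZ d p) - n i (ιZ d q))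
  have hb : ∀ i, (N : ℝ) ≤ n i (ιZ d (fun j => N * a j)) := by
    intro i
    have hι : ιZ d (fun j => (N : ℤ) * a j) = (N : ℝ) • ιZ d a := by
      funext j; simp only [ιZ, Pi.smul_apply, smul_eq_mul]; push_cast; ring
    rw [hι, map_smul, smul_eq_mul]
    nlinarith [ha i, Nat.cast_nonneg (α := ℝ) N]
  refine ⟨(fun j => N * a j) + (q - p), fun j => N * a j, ?_, ?_, by ring⟩
  · intro i
    have hι : ιZ d ((fun j => (N:ℤ) * a j) + (q - p)) =
        ιZ d (fun j => N * a j) + (ιZ d q - ιZ d p) := by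
      funext j; simp only [ιZ, Pi.add_apply, Pi.sub_apply]; push_cast; ring
    rw [hι, map_add, map_sub]
    have := hN i
    have := hb i
    linarith
  · intro i; linarith [hb i, Nat.cast_nonneg (α := ℝ) N]

lemma exists_interior_strict (hne : ∀ i, n i ≠ 0)
    (hfull : (interior {x : Fin d → ℝ | ∀ i, 0 ≤ n i x}).Nonempty) :
    ∃ x, ∀ i, 0 < n i x := by
  obtain ⟨x, hx⟩ := hfull
  obtain ⟨ε, hε, hball⟩ := Metric.mem_nhds_iff.mp (mem_interior_iff_mem_nhds.mp hx)
  refine ⟨x, fun i => ?_⟩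
  obtain ⟨y, hy⟩ : ∃ y, n i y ≠ 0 := by
    by_contra h
    push_neg at h
    exact hne i (LinearMap.ext fun y => h y)
  have hy0 : y ≠ 0 := fun h => hy (h ▸ (map_zero (n i)))
  have hny : 0 < ‖y‖ := norm_pos_iff.mpr hy0
  set δ := ε / (2 * ‖y‖) with hδ
  have hδ0 : 0 < δ := by positivity
  have hmem : ∀ c : ℝ, |c| = δ → x + c • y ∈ {x : Fin d → ℝ | ∀ i, 0 ≤ n i x} := by
    intro c hc
    apply hball
    rw [Metric.mem_ball, dist_eq_norm]
    have h0 : x + c • y - x = c • y := by abel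
    rw [h0, norm_smul, Real.norm_eq_abs, hc, hδ, div_mul_eq_mul_div,
      div_lt_iff₀ (by positivity)]
    nlinarith
  have h1' := hmem δ (abs_of_pos hδ0) i
  have h2' := hmem (-δ) (by rw [abs_neg, abs_of_pos hδ0]) i
  simp only [Set.mem_setOf_eq, map_add, map_smul, smul_eq_mul] at h1' h2'
  rcases lt_or_gt_of_ne hy with h | h
  · nlinarith [mul_pos hδ0 (neg_pos.mpr h)]
  · nlinarith [mul_pos hδ0 h]

end geom

section alg

variable (k : Type) [Field k] (d t : ℕ) (n : Fin t → ((Fin d → ℝ) →ₗ[ℝ] ℝ))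

lemma mem_toricR {m : Fin d → ℤ} (h : ∀ i, 0 ≤ n i (ιZ d m)) (c : k) :
    AddMonoidAlgebra.single m c ∈ toricR k d t n := by
  have h1 : AddMonoidAlgebra.single m (1 : k) ∈ toricR k d t n :=
    Algebra.subset_adjoin ⟨m, h, rfl⟩
  have h2 := (toricR k d t n).smul_mem h1 c
  simpa using h2

lemma mem_conicA {w : Fin d → ℝ} {m : Fin d → ℤ} (h : m ∈ latticePts n w) :
    AddMonoidAlgebra.single m (1 : k) ∈ conicA k d t n w :=
  Submodule.subset_span ⟨m, h, rfl⟩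

lemma Rsmul_def (r : ↥(toricR k d t n)) (x : AddMonoidAlgebra k (Fin d → ℤ)) :
    r • x = (r : AddMonoidAlgebra k (Fin d → ℤ)) * x := rfl

lemma mul_single_mem {u w : Fin d → ℝ} {m : Fin d → ℤ}
    (h : ∀ p, p ∈ latticePts n u → (m + p) ∈ latticePts n w) :
    ∀ x ∈ conicA k d t n u, AddMonoidAlgebra.single m (1 : k) * x ∈ conicA k d t n w := by
  intro x hx
  refine Submodule.span_induction ?_ ?_ ?_ ?_ hx
  · rintro f ⟨p, hp, rfl⟩
    rw [AddMonoidAlgebra.single_mul_single, one_mul]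
    exact mem_conicA k d t n (h p hp)
  · rw [mul_zero]; exact zero_mem _
  · intro x y _ _ hx hy; rw [mul_add]; exact add_mem hx hy
  · intro r x _ hx
    rw [Rsmul_def, mul_left_comm, ← Rsmul_def]
    exact Submodule.smul_mem _ r hx

/-- Multiplication by the monomial `x^m`, as a map between conic modules. -/
def mulShift {u w : Fin d → ℝ} (m : Fin d → ℤ)
    (h : ∀ p, p ∈ latticePts n u → (m + p) ∈ latticePts n w) :
    ↥(conicA k d t n u) →ₗ[↥(toricR k d t n)] ↥(conicA k d t n w) :=
  LinearMap.restrict (LinearMap.mulLeft ↥(toricR k d t n) (AddMonoidAlgebra.single m 1))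
    (fun x hx => mul_single_mem k d t n h x hx)

lemma mulShift_coe {u w : Fin d → ℝ} (m : Fin d → ℤ)
    (h : ∀ p, p ∈ latticePts n u → (m + p) ∈ latticePts n w)
    (x : ↥(conicA k d t n u)) :
    (mulShift k d t n m h x : AddMonoidAlgebra k (Fin d → ℤ)) =
      AddMonoidAlgebra.single m 1 * (x : AddMonoidAlgebra k (Fin d → ℤ)) := rfl

/-- Triviality of idempotent endomorphisms of a conic module. -/
lemma conicA_idem {a : Fin d → ℤ} (ha : ∀ i, 1 ≤ n i (ιZ d a))
    {w : Fin d → ℝ} {p0 : Fin d → ℤ} (hp0 : p0 ∈ latticePts n w)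
    (g : ↥(conicA k d t n w) →ₗ[↥(toricR k d t n)] ↥(conicA k d t n w))
    (hg : g ∘ₗ g = g) : g = 0 ∨ g = LinearMap.id := by
  classical
  set L := AddMonoidAlgebra k (Fin d → ℤ)
  set x0 : ↥(conicA k d t n w) := ⟨AddMonoidAlgebra.single p0 1, mem_conicA k d t n hp0⟩
    with hx0def
  set lam : L := (g x0 : L) * AddMonoidAlgebra.single (-p0) 1 with hlam
  have claimA : ∀ q (hq : q ∈ latticePts n w),
      ((g ⟨AddMonoidAlgebra.single q 1, mem_conicA k d t n hq⟩ : ↥(conicA k d t n w)) : L) =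
        lam * AddMonoidAlgebra.single q 1 := by
    intro q hq
    obtain ⟨b, c, hbC, hcC, hbc⟩ := exists_translate n ha p0 q
    set rb : ↥(toricR k d t n) := ⟨AddMonoidAlgebra.single b 1, mem_toricR k d t n hbC 1⟩
    set rc : ↥(toricR k d t n) := ⟨AddMonoidAlgebra.single c 1, mem_toricR k d t n hcC 1⟩
    set xq : ↥(conicA k d t n w) := ⟨AddMonoidAlgebra.single q 1, mem_conicA k d t n hq⟩
    have hxq : rb • x0 = rc • xq := by
      apply Subtype.ext
      rw [SetLike.val_smul, SetLike.val_smul, Rsmul_def, Rsmul_def]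
      show AddMonoidAlgebra.single b 1 * AddMonoidAlgebra.single p0 1 =
        AddMonoidAlgebra.single c 1 * AddMonoidAlgebra.single q 1
      rw [AddMonoidAlgebra.single_mul_single, AddMonoidAlgebra.single_mul_single, hbc]
    have h5 : AddMonoidAlgebra.single c (1:k) * (g xq : L) =
        AddMonoidAlgebra.single b (1:k) * (g x0 : L) := by
      have h6 : rc • g xq = rb • g x0 := by rw [← map_smul, ← map_smul, hxq]
      have h7 := congrArg (fun z : ↥(conicA k d t n w) => (z : L)) h6
      simpa [SetLike.val_smul, Rsmul_def] using h7
    have hone : AddMonoidAlgebra.single (-c) (1:k) * AddMonoidAlgebra.single c (1:k) = 1 := by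
      rw [AddMonoidAlgebra.single_mul_single, neg_add_cancel, one_mul]
      exact (AddMonoidAlgebra.one_def).symm
    have h8 : (g xq : L) = AddMonoidAlgebra.single (-c) 1 *
        (AddMonoidAlgebra.single b 1 * (g x0 : L)) := by
      rw [← h5, ← mul_assoc, hone, one_mul]
    have hcb : (-c) + b = q - p0 := by
      have hqc : b + p0 = q + c := by rw [hbc]; ring
      rw [neg_add_eq_sub, sub_eq_sub_iff_add_eq_add, hqc]
    have hL : (g xq : L) = AddMonoidAlgebra.single (q - p0) 1 * (g x0 : L) := by
      rw [h8, ← mul_assoc, AddMonoidAlgebra.single_mul_single, one_mul, hcb]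
    have hR : lam * AddMonoidAlgebra.single q 1 =
        AddMonoidAlgebra.single (q - p0) 1 * (g x0 : L) := by
      rw [hlam, mul_assoc, AddMonoidAlgebra.single_mul_single, one_mul, neg_add_eq_sub,
        mul_comm]
    exact hL.trans hR.symm
  have claimB : ∀ (x : L) (hx : x ∈ conicA k d t n w),
      ((g ⟨x, hx⟩ : ↥(conicA k d t n w)) : L) = lam * x := by
    intro x hx
    refine Submodule.span_induction
      (p := fun x hx => ((g ⟨x, hx⟩ : ↥(conicA k d t n w)) : L) = lam * x) ?_ ?_ ?_ ?_ hx
    · rintro f ⟨q, hq, rfl⟩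
      exact claimA q hq
    · show ((g (0 : ↥(conicA k d t n w)) : ↥(conicA k d t n w)) : L) = lam * 0
      rw [map_zero, mul_zero]; rfl
    · intro x y hxm hym ihx ihy
      show ((g (⟨x, hxm⟩ + ⟨y, hym⟩) : ↥(conicA k d t n w)) : L) = lam * (x + y)
      rw [map_add, Submodule.coe_add, ihx, ihy, mul_add]
    · intro r x hxm ih
      show ((g (r • ⟨x, hxm⟩) : ↥(conicA k d t n w)) : L) = lam * (r • x)
      rw [map_smul, SetLike.val_smul, Rsmul_def, Rsmul_def, ih]
      ring
  have hx0 : (g x0 : L) = lam * AddMonoidAlgebra.single p0 1 := claimB _ _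
  have hgg : g (g x0) = g x0 := by
    conv_rhs => rw [← hg]
    rfl
  have h9 : (g (g x0) : L) = lam * (g x0 : L) := claimB (g x0 : L) (g x0).2
  have h6 : lam * (lam * AddMonoidAlgebra.single p0 1) = lam * AddMonoidAlgebra.single p0 1 := by
    rw [← hx0, ← h9, hgg]
  have hu : AddMonoidAlgebra.single p0 (1:k) * AddMonoidAlgebra.single (-p0) (1:k) = 1 := by
    rw [AddMonoidAlgebra.single_mul_single, add_neg_cancel, one_mul]
    exact (AddMonoidAlgebra.one_def).symm
  have h8 : lam * lam = lam := by
    calc lam * lam = lam * lam *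
          (AddMonoidAlgebra.single p0 1 * AddMonoidAlgebra.single (-p0) 1) := by
            rw [hu, mul_one]
      _ = (lam * (lam * AddMonoidAlgebra.single p0 1)) * AddMonoidAlgebra.single (-p0) 1 := by
            ring
      _ = (lam * AddMonoidAlgebra.single p0 1) * AddMonoidAlgebra.single (-p0) 1 := by rw [h6]
      _ = lam * (AddMonoidAlgebra.single p0 1 * AddMonoidAlgebra.single (-p0) 1) := by ring
      _ = lam := by rw [hu, mul_one]
  have hl01 : lam = 0 ∨ lam = 1 := by
    have hfac : lam * (lam - 1) = 0 := by rw [mul_sub, mul_one, h8, sub_self]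
    rcases mul_eq_zero.mp hfac with h | h
    · exact Or.inl h
    · exact Or.inr (sub_eq_zero.mp h)
  rcases hl01 with h | h
  · left
    apply LinearMap.ext
    intro x
    apply Subtype.ext
    have := claimB (x : L) x.2
    rw [Subtype.coe_eta] at this
    rw [this, h, zero_mul]
    rfl
  · right
    apply LinearMap.ext
    intro x
    apply Subtype.ext
    have := claimB (x : L) x.2
    rw [Subtype.coe_eta] at this
    rw [this, h, one_mul]
    rfl

end alg


section endtheory

variable {R M N : Type} [CommRing R] [AddCommGroup M] [AddCommGroup N]
  [Module R M] [Module R N]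

/-- Identity conversion `HomMod → LinearMap`. -/
def toLin (f : HomMod R M N) : M →ₗ[R] N := f
/-- Identity conversion `LinearMap → HomMod`. -/
def ofLin (f : M →ₗ[R] N) : HomMod R M N := f
/-- Identity conversion `EndAlg → LinearMap`. -/
def toEnd (f : EndAlg R M) : M →ₗ[R] M := f
/-- Identity conversion `LinearMap → EndAlg`. -/
def ofEnd (f : M →ₗ[R] M) : EndAlg R M := f

lemma toLin_add (f g : HomMod R M N) : toLin (f + g) = toLin f + toLin g := rfl
lemma toEnd_add (f g : EndAlg R M) : toEnd (f + g) = toEnd f + toEnd g := rfl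
lemma toLin_zero : toLin (0 : HomMod R M N) = 0 := rfl
lemma toLin_ofLin (f : M →ₗ[R] N) : toLin (ofLin f) = f := rfl
lemma ofLin_toLin (f : HomMod R M N) : ofLin (toLin f) = f := rfl
lemma toLin_smul (c : (EndAlg R M)ᵐᵒᵖ) (f : HomMod R M N) :
    toLin (c • f) = (toLin f) ∘ₗ (toEnd (MulOpposite.unop c)) := rfl
lemma smul_eq_comp (h : M →ₗ[R] M) (f : HomMod R M N) :
    (MulOpposite.op (ofEnd h)) • f = ofLin ((toLin f) ∘ₗ h) := rfl

/-- `E` is finitely generated over `Eᵐᵒᵖ`. -/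
lemma finiteE : Module.Finite (EndAlg R M)ᵐᵒᵖ (EndAlg R M) := by
  constructor
  refine ⟨{1}, ?_⟩
  rw [eq_top_iff]
  rintro x -
  rw [Finset.coe_singleton, Submodule.mem_span_singleton]
  exact ⟨MulOpposite.op x, by
    rw [MulOpposite.smul_eq_mul_unop, MulOpposite.unop_op, one_mul]⟩

/-- `E ≃ Eᵐᵒᵖ` as `Eᵐᵒᵖ`-modules. -/
def eqvOp : EndAlg R M ≃ₗ[(EndAlg R M)ᵐᵒᵖ] (EndAlg R M)ᵐᵒᵖ where
  toFun x := MulOpposite.op x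
  invFun y := MulOpposite.unop y
  map_add' _ _ := rfl
  map_smul' c x := by
    show MulOpposite.op (c • x) = c • MulOpposite.op x
    rw [MulOpposite.smul_eq_mul_unop, smul_eq_mul, MulOpposite.op_mul, MulOpposite.op_unop]
  left_inv _ := rfl
  right_inv _ := rfl

lemma projE : Module.Projective (EndAlg R M)ᵐᵒᵖ (EndAlg R M) :=
  Module.Projective.of_split (eqvOp (R := R) (M := M)).toLinearMap
    (eqvOp (R := R) (M := M)).symm.toLinearMap
    (by apply LinearMap.ext; intro x; simp)

variable (e : M →ₗ[R] N) (ι : N →ₗ[R] M)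

/-- The map `f ↦ ι ∘ f` from `P = Hom(M,N)` to `E = End(M)`. -/
def alphaMap : HomMod R M N →ₗ[(EndAlg R M)ᵐᵒᵖ] EndAlg R M where
  toFun f := ofEnd (ι ∘ₗ toLin f)
  map_add' f g := by
    show ofEnd (ι ∘ₗ (toLin f + toLin g)) = ofEnd (ι ∘ₗ toLin f) + ofEnd (ι ∘ₗ toLin g)
    show ι ∘ₗ (toLin f + toLin g) = ι ∘ₗ toLin f + ι ∘ₗ toLin g
    apply LinearMap.ext; intro x
    simp
  map_smul' c f := rfl

/-- The map `g ↦ e ∘ g` from `E = End(M)` to `P = Hom(M,N)`. -/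
def betaMap : EndAlg R M →ₗ[(EndAlg R M)ᵐᵒᵖ] HomMod R M N where
  toFun g := ofLin (e ∘ₗ toEnd g)
  map_add' f g := by
    show ofLin (e ∘ₗ (toEnd f + toEnd g)) = ofLin (e ∘ₗ toEnd f) + ofLin (e ∘ₗ toEnd g)
    show e ∘ₗ (toEnd f + toEnd g) = e ∘ₗ toEnd f + e ∘ₗ toEnd g
    apply LinearMap.ext; intro x
    simp
  map_smul' c f := rfl

lemma beta_alpha (heι : ∀ x, e (ι x) = x) (f : HomMod R M N) :
    betaMap e (alphaMap ι f) = f := by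
  show ofLin (e ∘ₗ (ι ∘ₗ toLin f)) = f
  show (e ∘ₗ (ι ∘ₗ toLin f)) = toLin f
  apply LinearMap.ext; intro x
  exact heι _

lemma finiteP (heι : ∀ x, e (ι x) = x) :
    Module.Finite (EndAlg R M)ᵐᵒᵖ (HomMod R M N) := by
  haveI := finiteE (R := R) (M := M)
  exact Module.Finite.of_surjective (betaMap e)
    (fun f => ⟨alphaMap ι f, beta_alpha e ι heι f⟩)

lemma projP (heι : ∀ x, e (ι x) = x) :
    Module.Projective (EndAlg R M)ᵐᵒᵖ (HomMod R M N) := by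
  haveI := projE (R := R) (M := M)
  exact Module.Projective.of_split (alphaMap ι) (betaMap e)
    (LinearMap.ext fun f => beta_alpha e ι heι f)

lemma nonzeroP (heι : ∀ x, e (ι x) = x) (hN : ∃ y : N, y ≠ 0) :
    ∃ f : HomMod R M N, f ≠ 0 := by
  obtain ⟨y, hy⟩ := hN
  refine ⟨ofLin e, fun h => hy ?_⟩
  have h2 := congrArg (fun f => toLin f (ι y)) h
  show y = 0
  rw [← heι y]
  simpa [toLin_ofLin, toLin_zero] using h2

lemma indecompP (heι : ∀ x, e (ι x) = x)
    (hN : ∀ g : N →ₗ[R] N, g ∘ₗ g = g → g = 0 ∨ g = LinearMap.id)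
    (U V : Submodule (EndAlg R M)ᵐᵒᵖ (HomMod R M N)) (hUV : U ⊓ V = ⊥)
    (hUVt : U ⊔ V = ⊤) : U = ⊥ ∨ V = ⊥ := by
  have hcompl : IsCompl U V := ⟨disjoint_iff.mpr hUV, codisjoint_iff.mpr hUVt⟩
  set φ : HomMod R M N →ₗ[(EndAlg R M)ᵐᵒᵖ] HomMod R M N :=
    U.subtype ∘ₗ U.projectionOnto V hcompl with hφ
  have hφU : ∀ u, u ∈ U → φ u = u := by
    intro u hu
    show U.subtype (U.projectionOnto V hcompl u) = u
    rw [show u = ((⟨u, hu⟩ : U) : HomMod R M N) from rfl,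
      Submodule.projectionOnto_apply_left hcompl ⟨u, hu⟩]
    rfl
  have hφV : ∀ q, q ∈ V → φ q = 0 := by
    intro q hq
    show U.subtype (U.projectionOnto V hcompl q) = 0
    rw [show q = ((⟨q, hq⟩ : V) : HomMod R M N) from rfl,
      Submodule.projectionOnto_apply_right hcompl ⟨q, hq⟩]
    rfl
  have hφmem : ∀ p, φ p ∈ U := fun p => (U.projectionOnto V hcompl p).2
  set g : N →ₗ[R] N := (toLin (φ (ofLin e))) ∘ₗ ι with hgdef
  have key : ∀ f : HomMod R M N, φ f = ofLin (g ∘ₗ toLin f) := by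
    intro f
    have h1 : f = (MulOpposite.op (ofEnd (ι ∘ₗ toLin f))) • (ofLin e) := by
      rw [smul_eq_comp]
      show f = ofLin ((toLin (ofLin e)) ∘ₗ (ι ∘ₗ toLin f))
      rw [toLin_ofLin]
      show toLin f = e ∘ₗ (ι ∘ₗ toLin f)
      apply LinearMap.ext; intro x
      exact (heι _).symm
    conv_lhs => rw [h1, map_smul]
    rw [smul_eq_comp, hgdef]
    show ofLin ((toLin (φ (ofLin e))) ∘ₗ (ι ∘ₗ toLin f)) = _
    rw [LinearMap.comp_assoc]
  have hgg : g ∘ₗ g = g := by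
    have h2 : φ (φ (ofLin e)) = φ (ofLin e) := hφU _ (hφmem _)
    rw [key (φ (ofLin e)), key (ofLin e)] at h2
    apply LinearMap.ext; intro x
    have h3 := congrArg (fun h => toLin h (ι x)) h2
    simp only [toLin_ofLin, LinearMap.comp_apply] at h3 ⊢
    rw [heι x] at h3
    exact h3
  rcases hN g hgg with h | h
  · left
    rw [Submodule.eq_bot_iff]
    intro u hu
    have h4 := key u
    rw [h, LinearMap.zero_comp] at h4
    exact (hφU u hu).symm.trans h4
  · right
    rw [Submodule.eq_bot_iff]
    intro q hq
    have h4 := key q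
    rw [h, LinearMap.id_comp, ofLin_toLin] at h4
    exact ((hφV q hq).symm.trans h4).symm

end endtheory


/-- for a complete sum of conic modules `𝔸` and `E = End_R(𝔸)`, the
right `E`-module `P_v = Hom_R(𝔸, A_v)` (with `E` acting by precomposition, i.e. as a
left module over `Eᵐᵒᵖ`) is a finitely generated projective indecomposable module. -/
theorem stmt_12
    (d t : ℕ) (hd : 1 ≤ d)
    (n : Fin t → ((Fin d → ℝ) →ₗ[ℝ] ℝ))
    (hne : ∀ i, n i ≠ 0)
    (hint : ∀ i (m : Fin d → ℤ), ∃ z : ℤ, n i (ιZ d m) = z)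
    (hprim : ∀ i (z : ℤ), ∃ m : Fin d → ℤ, n i (ιZ d m) = z)
    (C : Set (Fin d → ℝ)) (hC : C = {x | ∀ i, 0 ≤ n i x})
    (hfull : (interior C).Nonempty)
    (hpointed : Submodule.span ℝ (Set.range n) = ⊤)
    (hirr : ∀ i, C ⊂ {x | ∀ j, j ≠ i → 0 ≤ n j x})
    (k : Type) [Field k]
    (s : ℕ) (v : Fin s → Fin d → ℝ)
    (hcomplete : ∀ w : Fin d → ℝ, ∃ (j : Fin s) (m : Fin d → ℤ),
      latticePts n w = (fun m' => m + m') '' latticePts n (v j)) :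
    ∀ w : Fin d → ℝ,
      Module.Finite (EndAlg ↥(toricR k d t n) (∀ j : Fin s, ↥(conicA k d t n (v j))))ᵐᵒᵖ
        (HomMod ↥(toricR k d t n) (∀ j : Fin s, ↥(conicA k d t n (v j))) ↥(conicA k d t n w)) ∧
      Module.Projective (EndAlg ↥(toricR k d t n) (∀ j : Fin s, ↥(conicA k d t n (v j))))ᵐᵒᵖ
        (HomMod ↥(toricR k d t n) (∀ j : Fin s, ↥(conicA k d t n (v j))) ↥(conicA k d t n w)) ∧
      (∃ f : HomMod ↥(toricR k d t n) (∀ j : Fin s, ↥(conicA k d t n (v j))) ↥(conicA k d t n w),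
        f ≠ 0) ∧
      (∀ U V : Submodule (EndAlg ↥(toricR k d t n) (∀ j : Fin s, ↥(conicA k d t n (v j))))ᵐᵒᵖ
          (HomMod ↥(toricR k d t n) (∀ j : Fin s, ↥(conicA k d t n (v j))) ↥(conicA k d t n w)),
        U ⊓ V = ⊥ → U ⊔ V = ⊤ → U = ⊥ ∨ V = ⊥) := by
  classical
  intro w
  obtain ⟨j, m, hm⟩ := hcomplete w
  have hxpos : ∃ x, ∀ i, 0 < n i x :=
    exists_interior_strict n hne (by rw [hC] at hfull; exact hfull)
  obtain ⟨a0, ha0⟩ := exists_deep n hxpos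
  obtain ⟨p0, hp0⟩ := latticePts_nonempty n ha0 w
  have h1 : ∀ p, p ∈ latticePts n (v j) → m + p ∈ latticePts n w := by
    intro p hp; rw [hm]; exact ⟨p, hp, rfl⟩
  have h2 : ∀ q, q ∈ latticePts n w → (-m) + q ∈ latticePts n (v j) := by
    intro q hq; rw [hm] at hq; obtain ⟨p, hp, rfl⟩ := hq; simpa using hp
  let f1 := mulShift k d t n (u := v j) (w := w) m h1
  let f2 := mulShift k d t n (u := w) (w := v j) (-m) h2
  have hf12 : ∀ x, f1 (f2 x) = x := by
    intro x
    apply Subtype.ext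
    rw [mulShift_coe, mulShift_coe, ← mul_assoc, AddMonoidAlgebra.single_mul_single,
      add_neg_cancel, one_mul, ← AddMonoidAlgebra.one_def, one_mul]
  let e : (∀ j : Fin s, ↥(conicA k d t n (v j))) →ₗ[↥(toricR k d t n)] ↥(conicA k d t n w) :=
    f1 ∘ₗ LinearMap.proj j
  let ι : ↥(conicA k d t n w) →ₗ[↥(toricR k d t n)] (∀ j : Fin s, ↥(conicA k d t n (v j))) :=
    (LinearMap.single ↥(toricR k d t n) (fun j : Fin s => ↥(conicA k d t n (v j))) j) ∘ₗ f2
  have heι : ∀ x, e (ι x) = x := by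
    intro x
    show f1 ((LinearMap.proj j)
      ((LinearMap.single ↥(toricR k d t n) (fun j : Fin s => ↥(conicA k d t n (v j))) j)
        (f2 x))) = x
    rw [LinearMap.proj_apply, LinearMap.single_apply, Pi.single_eq_same]
    exact hf12 x
  have hnz : ∃ y : ↥(conicA k d t n w), y ≠ 0 := by
    refine ⟨⟨AddMonoidAlgebra.single p0 1, mem_conicA k d t n hp0⟩, fun h => ?_⟩
    have h3 := congrArg (fun z : ↥(conicA k d t n w) =>
      (z : AddMonoidAlgebra k (Fin d → ℤ))) h
    simp only [ZeroMemClass.coe_zero] at h3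
    have h4 : (1 : k) = 0 := by simpa using h3
    exact one_ne_zero h4
  refine ⟨finiteP e ι heι, projP e ι heι, nonzeroP e ι heι hnz, ?_⟩
  intro U V hUV hUVt
  exact indecompP e ι heι (fun g hg => conicA_idem k d t n ha0 hp0 g hg) U V hUV hUVt
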